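/- Let n ≥ 2 be a natural number, r > 0 a real number, and set λ = 1/(16(n-1)^2) and s = √λ · r. Work in EuclideanSpace ℝ (Fin (n+1)), with coordinates x = (x_1, …, x_{n+1}). Let p be the point whose coordinates x_1, …, x_{n-1} and x_{n+1} all vanish and whose n-th coordinate p_n satisfies (λ - 1)·r ≤ p_n ≤ (2λ - 1)·r. Then every point x with ‖x - p‖ ≥ r and ‖x‖ ≤ s has x_n > 0. -/

import Mathlib

open scoped RealInnerProductSpace


/-- The computational core of Lemma 5.3 (1): with `λ = 1/(16(n-1)²)`, `s = √λ · r`, and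
`p` the point of `ℝ^{n+1}` whose only (possibly) nonzero coordinate is the `n`-th one,
with `(λ-1)r ≤ p_n ≤ (2λ-1)r`, every point `x` with `‖x - p‖ ≥ r` and `‖x‖ ≤ s`
has positive `n`-th coordinate.  (Coordinates are indexed by `Fin (n+1)`, so the
`n`-th coordinate of the paper corresponds to index `n - 1` and the `(n+1)`-st to
index `n`.) -/
theorem quarter_space (n : ℕ) (hn : 2 ≤ n) (r : ℝ) (hr : 0 < r)
    (lam s : ℝ) (hlam : lam = 1 / (16 * ((n : ℝ) - 1) ^ 2))
    (hs : s = Real.sqrt lam * r)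
    (p : EuclideanSpace ℝ (Fin (n + 1)))
    (hp0 : ∀ i : Fin (n + 1), (i : ℕ) ≠ n - 1 → p i = 0)
    (hpn1 : (lam - 1) * r ≤ p ⟨n - 1, by omega⟩)
    (hpn2 : p ⟨n - 1, by omega⟩ ≤ (2 * lam - 1) * r)
    (x : EuclideanSpace ℝ (Fin (n + 1)))
    (hx1 : r ≤ ‖x - p‖) (hx2 : ‖x‖ ≤ s) :
    0 < x ⟨n - 1, by omega⟩ := by
  have hn1 : (1:ℝ) ≤ (n:ℝ) - 1 := by
    have : (2:ℝ) ≤ (n:ℝ) := by exact_mod_cast hn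
    linarith
  set j : Fin (n+1) := ⟨n - 1, by omega⟩ with hj
  have hlampos : 0 < lam := by rw [hlam]; positivity
  have hlamle : lam ≤ 1/16 := by
    rw [hlam, div_le_div_iff₀ (by positivity) (by norm_num)]
    nlinarith
  have ha : p j < 0 := lt_of_le_of_lt hpn2 (by nlinarith)
  have hinner : (inner ℝ x p : ℝ) = x j * p j := by
    rw [PiLp.inner_apply, Finset.sum_eq_single j]
    · simp [RCLike.inner_apply, mul_comm]
    · intro i _ hij
      rw [hp0 i (fun h => hij (Fin.ext h))]; simp
    · simp
  have hinnerp : (inner ℝ p p : ℝ) = p j * p j := by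
    rw [PiLp.inner_apply, Finset.sum_eq_single j]
    · simp [RCLike.inner_apply, sq]
    · intro i _ hij
      rw [hp0 i (fun h => hij (Fin.ext h))]; simp
    · simp
  have hnp : ‖p‖ ^ 2 = p j * p j := by
    rw [← real_inner_self_eq_norm_sq]; exact hinnerp
  have hexp : ‖x - p‖ ^ 2 = ‖x‖ ^ 2 - 2 * (x j * p j) + p j * p j := by
    rw [norm_sub_sq_real, hinner, hnp]
  have h1 : r ^ 2 ≤ ‖x‖ ^ 2 - 2 * (x j * p j) + p j * p j := by
    rw [← hexp]
    exact pow_le_pow_left₀ hr.le hx1 2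
  have h2 : ‖x‖ ^ 2 ≤ lam * r ^ 2 := by
    have hs2 : s ^ 2 = lam * r ^ 2 := by
      rw [hs, mul_pow, Real.sq_sqrt hlampos.le]
    calc ‖x‖ ^ 2 ≤ s ^ 2 := pow_le_pow_left₀ (norm_nonneg x) hx2 2
      _ = lam * r ^ 2 := hs2
  have hta : x j * p j < 0 := by
    nlinarith [mul_nonneg (sub_nonneg.2 hpn1) (sub_nonneg.2 hpn2), sq_nonneg r,
      mul_pos hr hr, mul_pos hlampos (mul_pos hr hr)]
  have : 0 < x j := by
    by_contra h
    push_neg at h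
    nlinarith [mul_nonneg (neg_nonneg.2 h) (neg_nonneg.2 ha.le)]
  exact this
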